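/- arXiv:1707.09534 — 2 statements merged into one kernel-verified Lean document; each statement's English description precedes it below -/
import Mathlib

section
/- Let N ≥ 1 and let g be an invertible linear endomorphism of ℂ^{N+1}, inducing a map φ on the complex projective space ℙ^N(ℂ) (the projectivization of ℂ^{N+1}). Suppose ν is a nonzero finite Borel measure on ℙ^N(ℂ) which is invariant under φ (the pushforward of ν by φ equals ν) and which gives measure zero to every projective hyperplane, i.e. ν({[v] ∈ ℙ^N(ℂ) : ℓ(v) = 0}) = 0 for every nonzero linear functional ℓ : ℂ^{N+1} → ℂ. Then g is diagonalizable (semisimple), and all eigenvalues of g have the same absolute value. -/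
open MeasureTheory

/-- The quotient topology on the projectivization of a topological vector space. -/
noncomputable def projectivizationTopology (V : Type*) [AddCommGroup V] [Module ℂ V]
    [TopologicalSpace V] : TopologicalSpace (Projectivization ℂ V) :=
  instTopologicalSpaceQuotient

/-- The Borel σ-algebra on the projectivization. -/
noncomputable def projectivizationBorel (V : Type*) [AddCommGroup V] [Module ℂ V]
    [TopologicalSpace V] : MeasurableSpace (Projectivization ℂ V) :=
  @borel _ (projectivizationTopology V)

open Filter Topology

section Aux

variable {V : Type*} [NormedAddCommGroup V] [NormedSpace ℂ V]

/-- powers applied to an eigenvector -/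
lemma aux_pow_eig (T : V →L[ℂ] V) (c : ℂ) (v : V) (h : T v = c • v) (n : ℕ) :
    (T ^ n) v = c ^ n • v := by
  induction n with
  | zero => simp
  | succ n ih =>
    rw [pow_succ', ContinuousLinearMap.mul_apply, ih, _root_.map_smul, h, smul_smul, ← pow_succ]

/-- powers applied to a generalized eigenvector of rank 2 -/
lemma aux_pow_chain (T : V →L[ℂ] V) (c : ℂ) (hc : c ≠ 0) (v w : V)
    (hv : T v = c • v + w) (hw : T w = c • w) (n : ℕ) :
    (T ^ n) v = c ^ n • v + ((n : ℂ) * c ^ n / c) • w := by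
  induction n with
  | zero => simp
  | succ n ih =>
    rw [pow_succ', ContinuousLinearMap.mul_apply, ih, map_add, _root_.map_smul, _root_.map_smul, hv, hw]
    rw [smul_add, smul_smul, add_assoc, smul_smul]
    have h2 : (c : ℂ) ^ n • w + (↑n * c ^ n / c * c) • w = (↑(n + 1) * c ^ (n + 1) / c) • w := by
      rw [← add_smul]
      congr 1
      field_simp
      push_cast
      ring
    rw [h2, ← pow_succ]

lemma aux_mul_lt_scale {t X Y a : ℝ} (ht : 0 < t) : a * (t * X) < t * Y ↔ a * X < Y := by
  rw [mul_left_comm]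
  exact mul_lt_mul_iff_right₀ ht

end Aux

/-- reduction for semisimplicity: if order-2 generalized eigenvectors are eigenvectors,
then all generalized eigenvectors are eigenvectors. -/
lemma aux_maxGen_le_eigen {V : Type*} [AddCommGroup V] [Module ℂ V]
    (T : Module.End ℂ V)
    (h : ∀ (c : ℂ) (v : V), (T - c • 1) ((T - c • 1) v) = 0 → (T - c • 1) v = 0)
    (c : ℂ) : Module.End.maxGenEigenspace T c ≤ Module.End.eigenspace T c := by
  intro x hx
  rw [Module.End.mem_maxGenEigenspace] at hx
  obtain ⟨k, hk⟩ := hx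
  have key : ∀ (m : ℕ) (y : V), ((T - c • 1) ^ m) y = 0 → (T - c • 1) y = 0 := by
    intro m
    induction m with
    | zero =>
      intro y hy
      simp only [pow_zero, Module.End.one_apply] at hy
      simp [hy]
    | succ m ih =>
      intro y hy
      have h2 : ((T - c • 1) ^ m) ((T - c • 1) y) = 0 := by
        rw [← Module.End.mul_apply, ← pow_succ]
        exact hy
      exact h c y (ih _ h2)
  have h3 := key k x hk
  rw [Module.End.mem_eigenspace_iff]
  rw [LinearMap.sub_apply, LinearMap.smul_apply, Module.End.one_apply, sub_eq_zero] at h3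
  exact h3

/-- iterates of the projectivized map. -/
lemma aux_iter_mk {V : Type*} [AddCommGroup V] [Module ℂ V]
    (f : V →ₗ[ℂ] V) (hf : Function.Injective f)
    (hfpow : ∀ (n : ℕ) (v : V), v ≠ 0 → (f ^ n) v ≠ 0)
    (n : ℕ) (v : V) (hv : v ≠ 0) :
    (Projectivization.map f hf)^[n] (Projectivization.mk ℂ v hv)
      = Projectivization.mk ℂ ((f ^ n) v) (hfpow n v hv) := by
  induction n with
  | zero => simp
  | succ n ih =>
    rw [Function.iterate_succ_apply', ih, Projectivization.map_mk]
    congr 1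
    rw [← Module.End.mul_apply, ← pow_succ']

set_option maxHeartbeats 1000000 in
/-- Let `g` be an invertible linear endomorphism of `ℂ^{N+1}` (`N ≥ 1`), inducing a map
`φ` on `ℙ^N(ℂ)`. If some nonzero finite Borel measure `ν` on `ℙ^N(ℂ)` is `φ`-invariant
and gives measure zero to every projective hyperplane, then `g` is diagonalizable and
all of its eigenvalues have the same absolute value. -/
theorem stmt_7 (N : ℕ) (hN : 1 ≤ N)
    (g : (Fin (N + 1) → ℂ) ≃ₗ[ℂ] (Fin (N + 1) → ℂ)) :
    letI : MeasurableSpace (Projectivization ℂ (Fin (N + 1) → ℂ)) :=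
      projectivizationBorel (Fin (N + 1) → ℂ)
    ∀ ν : Measure (Projectivization ℂ (Fin (N + 1) → ℂ)),
      IsFiniteMeasure ν → ν ≠ 0 →
      Measure.map
        (Projectivization.map ((g : (Fin (N + 1) → ℂ) →ₗ[ℂ] (Fin (N + 1) → ℂ)))
          g.injective) ν = ν →
      (∀ ℓ : (Fin (N + 1) → ℂ) →ₗ[ℂ] ℂ, ℓ ≠ 0 →
        ν {x : Projectivization ℂ (Fin (N + 1) → ℂ) | ℓ x.rep = 0} = 0) →
      (⨆ c : ℂ,
        Module.End.eigenspace (g : (Fin (N + 1) → ℂ) →ₗ[ℂ] (Fin (N + 1) → ℂ)) c) = ⊤ ∧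
      ∀ c₁ c₂ : ℂ,
        Module.End.HasEigenvalue (g : (Fin (N + 1) → ℂ) →ₗ[ℂ] (Fin (N + 1) → ℂ)) c₁ →
        Module.End.HasEigenvalue (g : (Fin (N + 1) → ℂ) →ₗ[ℂ] (Fin (N + 1) → ℂ)) c₂ →
        ‖c₁‖ = ‖c₂‖ := by
  intro ν hfin hνne hinv hhyp
  letI tp : TopologicalSpace (Projectivization ℂ (Fin (N + 1) → ℂ)) :=
    projectivizationTopology (Fin (N + 1) → ℂ)
  letI ms : MeasurableSpace (Projectivization ℂ (Fin (N + 1) → ℂ)) :=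
    projectivizationBorel (Fin (N + 1) → ℂ)
  haveI hbs : @BorelSpace _ tp ms := ⟨rfl⟩
  set A : (Fin (N + 1) → ℂ) →ₗ[ℂ] (Fin (N + 1) → ℂ) :=
    (g : (Fin (N + 1) → ℂ) →ₗ[ℂ] (Fin (N + 1) → ℂ)) with hAdef
  set Ac : (Fin (N + 1) → ℂ) →L[ℂ] (Fin (N + 1) → ℂ) :=
    LinearMap.toContinuousLinearMap A with hAcdef
  have hAcapp : ∀ v, Ac v = A v := fun v => rfl
  -- nonvanishing of powers
  have hgne : ∀ v : Fin (N + 1) → ℂ, v ≠ 0 → A v ≠ 0 := by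
    intro v hv h
    exact hv (g.injective (show g v = g 0 by rw [map_zero]; exact h))
  have hpow_eq : ∀ (n : ℕ) (v : Fin (N + 1) → ℂ), (Ac ^ n) v = (A ^ n) v := by
    intro n
    induction n with
    | zero => intro v; simp
    | succ n ih =>
      intro v
      rw [pow_succ, pow_succ, ContinuousLinearMap.mul_apply, Module.End.mul_apply, hAcapp, ih]
  have hpowne : ∀ (n : ℕ) (v : Fin (N + 1) → ℂ), v ≠ 0 → (A ^ n) v ≠ 0 := by
    intro n
    induction n with
    | zero => intro v hv; simpa using hv
    | succ n ih =>
      intro v hv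
      rw [pow_succ, Module.End.mul_apply]
      exact ih _ (hgne v hv)
  have hpowneC : ∀ (n : ℕ) (v : Fin (N + 1) → ℂ), v ≠ 0 → (Ac ^ n) v ≠ 0 := by
    intro n v hv; rw [hpow_eq]; exact hpowne n v hv
  -- norms of powers are positive
  have hAcn : ∀ n : ℕ, 0 < ‖Ac ^ n‖ := by
    intro n
    have h0 : (fun _ => (1 : ℂ)) ≠ (0 : Fin (N + 1) → ℂ) := by
      intro h; exact one_ne_zero (congrFun h 0)
    have h1 := hpowneC n _ h0
    have hne : Ac ^ n ≠ 0 := by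
      intro h; rw [h] at h1; exact h1 rfl
    exact norm_pos_iff.mpr hne
  -- the normalized powers
  obtain ⟨C, hC1, hCapp⟩ : ∃ C : ℕ → ((Fin (N + 1) → ℂ) →L[ℂ] (Fin (N + 1) → ℂ)),
      (∀ n, ‖C n‖ = 1) ∧ ∀ (n : ℕ) (v : Fin (N + 1) → ℂ),
        C n v = ((‖Ac ^ n‖ : ℂ))⁻¹ • (Ac ^ n) v := by
    refine ⟨fun n => ((‖Ac ^ n‖ : ℂ))⁻¹ • Ac ^ n, fun n => ?_, fun n v => rfl⟩
    show ‖((‖Ac ^ n‖ : ℂ))⁻¹ • Ac ^ n‖ = 1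
    have h := norm_smul ((‖Ac ^ n‖ : ℂ))⁻¹ (Ac ^ n)
    rw [h, norm_inv, Complex.norm_real, Real.norm_of_nonneg (norm_nonneg _),
      inv_mul_cancel₀ (hAcn n).ne']
  haveI := FiniteDimensional.proper ℂ ((Fin (N + 1) → ℂ) →L[ℂ] (Fin (N + 1) → ℂ))
  obtain ⟨B, hBmem, σ, hσ, hBlim⟩ :=
    (isCompact_sphere (0 : (Fin (N + 1) → ℂ) →L[ℂ] (Fin (N + 1) → ℂ)) 1).tendsto_subseq
      (fun n => by rw [mem_sphere_zero_iff_norm]; exact hC1 n)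
  have hBnorm : ‖B‖ = 1 := mem_sphere_zero_iff_norm.mp hBmem
  have hApp : ∀ v : Fin (N + 1) → ℂ, Tendsto (fun k => C (σ k) v) atTop (𝓝 (B v)) := fun v =>
    ((ContinuousLinearMap.apply ℂ (Fin (N + 1) → ℂ) v).continuous.tendsto B).comp hBlim
  -- norm of C n applied to eigen-type vectors
  have hnormsmul : ∀ (n : ℕ) (u : Fin (N + 1) → ℂ),
      ‖C n u‖ = ‖Ac ^ n‖⁻¹ * ‖(Ac ^ n) u‖ := by
    intro n u
    rw [hCapp]
    have h := norm_smul ((‖Ac ^ n‖ : ℂ))⁻¹ ((Ac ^ n) u)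
    rw [h, norm_inv, Complex.norm_real, Real.norm_of_nonneg (norm_nonneg _)]
  have hbase : ∀ (u : Fin (N + 1) → ℂ) (cu : ℂ), u ≠ 0 → Ac u = cu • u →
      Tendsto (fun k => ‖Ac ^ (σ k)‖⁻¹ * ‖cu‖ ^ (σ k)) atTop (𝓝 (‖B u‖ * ‖u‖⁻¹)) := by
    intro u cu hu he
    have h1 : ∀ k, ‖C (σ k) u‖ * ‖u‖⁻¹ = ‖Ac ^ (σ k)‖⁻¹ * ‖cu‖ ^ (σ k) := by
      intro k
      have hu' : ‖u‖ ≠ 0 := norm_ne_zero_iff.mpr hu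
      have hsm : ‖(cu ^ (σ k)) • u‖ = ‖cu‖ ^ (σ k) * ‖u‖ := by
        rw [norm_smul, norm_pow]
      rw [hnormsmul, aux_pow_eig _ _ _ he, hsm, mul_assoc, mul_assoc,
        mul_inv_cancel₀ hu', mul_one]
    have h2 : Tendsto (fun k => ‖C (σ k) u‖) atTop (𝓝 ‖B u‖) :=
      (continuous_norm.tendsto (B u)).comp (hApp u)
    have h3 := h2.mul_const (‖u‖⁻¹)
    have h4 : (fun k => ‖C (σ k) u‖ * ‖u‖⁻¹)
        = fun k => ‖Ac ^ (σ k)‖⁻¹ * ‖cu‖ ^ (σ k) := funext h1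
    rwa [h4] at h3
  by_cases hinj : Function.Injective B
  · have hBne : ∀ u : Fin (N + 1) → ℂ, u ≠ 0 → B u ≠ 0 := by
      intro u hu h
      exact hu (hinj (by rw [h, map_zero]))
    constructor
    · -- semisimplicity
      by_contra hss
      have hchain : ∃ (c : ℂ) (v : Fin (N + 1) → ℂ),
          (A - c • 1) ((A - c • 1) v) = 0 ∧ (A - c • 1) v ≠ 0 := by
        by_contra hno
        push_neg at hno
        have hred := aux_maxGen_le_eigen A (fun c v h => hno c v h)
        have hle : (⨆ c, Module.End.maxGenEigenspace A c) ≤ ⨆ c, Module.End.eigenspace A c :=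
          iSup_mono hred
        rw [Module.End.iSup_maxGenEigenspace_eq_top] at hle
        exact hss (top_le_iff.mp hle)
      obtain ⟨c, v, hv2, hv1⟩ := hchain
      have hAv : A v = c • v + (A - c • 1) v := by
        rw [LinearMap.sub_apply, LinearMap.smul_apply, Module.End.one_apply]
        abel
      have hAw : A ((A - c • 1) v) = c • ((A - c • 1) v) := by
        have := hv2
        rw [LinearMap.sub_apply, LinearMap.smul_apply, Module.End.one_apply, sub_eq_zero] at this
        exact this
      have hc0 : c ≠ 0 := by
        intro h
        subst h
        simp only [zero_smul, sub_zero] at hAw hv1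
        exact hv1 (g.injective (show g (A v) = g 0 by rw [map_zero]; exact hAw))
      have hAcv : Ac v = c • v + (A - c • 1) v := by rw [hAcapp]; exact hAv
      have hAcw : Ac ((A - c • 1) v) = c • ((A - c • 1) v) := by rw [hAcapp]; exact hAw
      have hv0 : v ≠ 0 := by
        intro h; rw [h, map_zero] at hv1; exact hv1 rfl
      have ht := hbase ((A - c • 1) v) c hv1 hAcw
      have hb : 0 < ‖B ((A - c • 1) v)‖ * ‖(A - c • 1) v‖⁻¹ :=
        mul_pos (norm_pos_iff.mpr (hBne _ hv1)) (inv_pos.mpr (norm_pos_iff.mpr hv1))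
      have hcn : 0 < ‖c‖ := norm_pos_iff.mpr hc0
      -- lower bound on ‖C (σ k) v‖
      have hlow : ∀ k, (‖Ac ^ (σ k)‖⁻¹ * ‖c‖ ^ (σ k)) *
          ((σ k : ℝ) * (‖(A - c • 1) v‖ * ‖c‖⁻¹) - ‖v‖) ≤ ‖C (σ k) v‖ := by
        intro k
        have hch := aux_pow_chain Ac c hc0 v _ hAcv hAcw (σ k)
        have h5 : ‖((σ k : ℂ) * c ^ (σ k) / c) • ((A - c • 1) v)‖ - ‖c ^ (σ k) • v‖
            ≤ ‖(Ac ^ (σ k)) v‖ := by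
          rw [hch]
          have h6 := norm_le_add_norm_add (((σ k : ℂ) * c ^ (σ k) / c) • ((A - c • 1) v))
            (c ^ (σ k) • v)
          rw [add_comm (((σ k : ℂ) * c ^ (σ k) / c) • ((A - c • 1) v)) (c ^ (σ k) • v)] at h6
          linarith
        have h7 : ‖((σ k : ℂ) * c ^ (σ k) / c) • ((A - c • 1) v)‖
            = (σ k : ℝ) * ‖c‖ ^ (σ k) / ‖c‖ * ‖(A - c • 1) v‖ := by
          have h := norm_smul ((σ k : ℂ) * c ^ (σ k) / c) ((A - c • 1) v)
          rw [h, norm_div, norm_mul, norm_pow, Complex.norm_natCast]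
        have h8 : ‖c ^ (σ k) • v‖ = ‖c‖ ^ (σ k) * ‖v‖ := by
          have h := norm_smul (c ^ (σ k)) v
          rw [h, norm_pow]
        rw [hnormsmul]
        have h9 : (‖Ac ^ (σ k)‖⁻¹ * ‖c‖ ^ (σ k)) * ((σ k : ℝ) * (‖(A - c • 1) v‖ * ‖c‖⁻¹) - ‖v‖)
            = ‖Ac ^ (σ k)‖⁻¹ * ((σ k : ℝ) * ‖c‖ ^ (σ k) / ‖c‖ * ‖(A - c • 1) v‖
              - ‖c‖ ^ (σ k) * ‖v‖) := by
          rw [div_eq_mul_inv]; ring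
        rw [h9]
        rw [h7, h8] at h5
        have h10 : (0:ℝ) ≤ ‖Ac ^ (σ k)‖⁻¹ := inv_nonneg.mpr (norm_nonneg _)
        have h11 := mul_le_mul_of_nonneg_left h5 h10
        linarith
      have hinner : Tendsto (fun k => (σ k : ℝ) * (‖(A - c • 1) v‖ * ‖c‖⁻¹) - ‖v‖)
          atTop atTop := by
        have hq : 0 < ‖(A - c • 1) v‖ * ‖c‖⁻¹ :=
          mul_pos (norm_pos_iff.mpr hv1) (inv_pos.mpr hcn)
        have h1 : Tendsto (fun k => (σ k : ℝ)) atTop atTop :=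
          tendsto_natCast_atTop_atTop.comp hσ.tendsto_atTop
        have h2 := h1.atTop_mul_const hq
        have h3 := tendsto_atTop_add_const_right atTop (-‖v‖) h2
        simpa [sub_eq_add_neg] using h3
      have hdiv : Tendsto (fun k => (‖Ac ^ (σ k)‖⁻¹ * ‖c‖ ^ (σ k)) *
          ((σ k : ℝ) * (‖(A - c • 1) v‖ * ‖c‖⁻¹) - ‖v‖)) atTop atTop :=
        Filter.Tendsto.pos_mul_atTop hb ht hinner
      have hup : Tendsto (fun k => ‖C (σ k) v‖) atTop (𝓝 ‖B v‖) :=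
        (continuous_norm.tendsto (B v)).comp (hApp v)
      exact not_tendsto_atTop_of_tendsto_nhds hup (tendsto_atTop_mono hlow hdiv)
    · -- equal moduli
      have hkey : ∀ c₁ c₂ : ℂ, Module.End.HasEigenvalue A c₁ → Module.End.HasEigenvalue A c₂ →
          ‖c₁‖ < ‖c₂‖ → False := by
        intro c₁ c₂ h1 h2 hlt
        obtain ⟨v₁, hv₁⟩ := h1.exists_hasEigenvector
        obtain ⟨v₂, hv₂⟩ := h2.exists_hasEigenvector
        have e₁ : Ac v₁ = c₁ • v₁ := by rw [hAcapp]; exact hv₁.apply_eq_smul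
        have e₂ : Ac v₂ = c₂ • v₂ := by rw [hAcapp]; exact hv₂.apply_eq_smul
        have t1 := hbase v₁ c₁ hv₁.2 e₁
        have t2 := hbase v₂ c₂ hv₂.2 e₂
        have ha : 0 < ‖B v₁‖ * ‖v₁‖⁻¹ :=
          mul_pos (norm_pos_iff.mpr (hBne _ hv₁.2)) (inv_pos.mpr (norm_pos_iff.mpr hv₁.2))
        have hc2 : 0 < ‖c₂‖ := lt_of_le_of_lt (norm_nonneg c₁) hlt
        have hratio : Tendsto (fun k => (‖c₁‖ / ‖c₂‖) ^ (σ k)) atTop (𝓝 0) :=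
          (tendsto_pow_atTop_nhds_zero_of_lt_one (div_nonneg (norm_nonneg _) (norm_nonneg _))
            ((div_lt_one hc2).mpr hlt)).comp hσ.tendsto_atTop
        have heq : (fun k => ‖Ac ^ (σ k)‖⁻¹ * ‖c₁‖ ^ (σ k))
            = fun k => (‖c₁‖ / ‖c₂‖) ^ (σ k) * (‖Ac ^ (σ k)‖⁻¹ * ‖c₂‖ ^ (σ k)) := by
          funext k
          symm
          calc (‖c₁‖ / ‖c₂‖) ^ (σ k) * (‖Ac ^ (σ k)‖⁻¹ * ‖c₂‖ ^ (σ k))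
              = ‖Ac ^ (σ k)‖⁻¹ * (‖c₁‖ ^ (σ k) * (‖c₂‖⁻¹ * ‖c₂‖) ^ (σ k)) := by
                rw [div_eq_mul_inv, mul_pow, mul_pow]; ring
            _ = ‖Ac ^ (σ k)‖⁻¹ * ‖c₁‖ ^ (σ k) := by
                rw [inv_mul_cancel₀ hc2.ne', one_pow, mul_one]
        have t1' : Tendsto (fun k => (‖c₁‖ / ‖c₂‖) ^ (σ k) * (‖Ac ^ (σ k)‖⁻¹ * ‖c₂‖ ^ (σ k)))
            atTop (𝓝 (0 * (‖B v₂‖ * ‖v₂‖⁻¹))) := hratio.mul t2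
        rw [zero_mul] at t1'
        rw [heq] at t1
        exact ha.ne' (tendsto_nhds_unique t1 t1')
      intro c₁ c₂ h1 h2
      by_contra hne
      rcases lt_or_gt_of_ne hne with h | h
      · exact hkey c₁ c₂ h1 h2 h
      · exact hkey c₂ c₁ h2 h1 h
  · -- B is not injective: derive a contradiction from the invariant measure
    exfalso
    letI st : Setoid {v : Fin (N + 1) → ℂ // v ≠ 0} :=
      projectivizationSetoid ℂ (Fin (N + 1) → ℂ)
    have hcoe : ⇑(B : (Fin (N + 1) → ℂ) →ₗ[ℂ] (Fin (N + 1) → ℂ)) = ⇑B := rfl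
    have hkerne : LinearMap.ker (B : (Fin (N + 1) → ℂ) →ₗ[ℂ] (Fin (N + 1) → ℂ)) ≠ ⊤ := by
      intro h
      have hB0 : B = 0 := by
        apply ContinuousLinearMap.ext
        intro v
        have hv : v ∈ LinearMap.ker (B : (Fin (N + 1) → ℂ) →ₗ[ℂ] (Fin (N + 1) → ℂ)) := by
          rw [h]; exact Submodule.mem_top
        rw [ContinuousLinearMap.zero_apply]
        simpa using hv
      rw [hB0, norm_zero] at hBnorm
      exact one_ne_zero hBnorm.symm
    have hsurj : ¬ Function.Surjective B := by
      intro hs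
      exact hinj (hcoe ▸ (LinearMap.injective_iff_surjective
        (f := (B : (Fin (N + 1) → ℂ) →ₗ[ℂ] (Fin (N + 1) → ℂ)))).mpr (hcoe ▸ hs))
    obtain ⟨ℓ₀, hℓ₀ne, hrange⟩ :=
      (LinearMap.range (B : (Fin (N + 1) → ℂ) →ₗ[ℂ] (Fin (N + 1) → ℂ))).exists_le_ker_of_lt_top
        (lt_top_iff_ne_top.mpr (by
          intro h
          exact hsurj (hcoe ▸ LinearMap.range_eq_top.mp h)))
    obtain ⟨ℓ', hℓ'ne, hker⟩ :=
      (LinearMap.ker (B : (Fin (N + 1) → ℂ) →ₗ[ℂ] (Fin (N + 1) → ℂ))).exists_le_ker_of_lt_top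
        (lt_top_iff_ne_top.mpr hkerne)
    have hℓ₀B : ∀ v, ℓ₀ (B v) = 0 := by
      intro v
      exact LinearMap.mem_ker.mp (hrange (LinearMap.mem_range.mpr ⟨v, rfl⟩))
    -- the projectivized map and its measurability
    have hφinv : Measure.map (Projectivization.map A g.injective) ν = ν := hinv
    have hℓ₀c : Continuous ℓ₀ := ℓ₀.continuous_of_finiteDimensional
    have hφcont : Continuous (Projectivization.map A g.injective) := by
      refine isQuotientMap_quotient_mk'.continuous_iff.mpr ?_
      have heq : (Projectivization.map A g.injective) ∘
          (Quotient.mk' : {v : Fin (N + 1) → ℂ // v ≠ 0} →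
            Projectivization ℂ (Fin (N + 1) → ℂ))
          = fun x : {v : Fin (N + 1) → ℂ // v ≠ 0} =>
            (Quotient.mk' (⟨A x.1, fun hc => x.2 (g.injective
              (show g x.1 = g 0 by rw [map_zero]; exact hc))⟩ :
                {v : Fin (N + 1) → ℂ // v ≠ 0}) :
              Projectivization ℂ (Fin (N + 1) → ℂ)) := rfl
      erw [heq]
      exact continuous_quotient_mk'.comp
        (Continuous.subtype_mk ((A.continuous_of_finiteDimensional).comp
          continuous_subtype_val) _)
    have hφm : Measurable (Projectivization.map A g.injective) := hφcont.measurable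
    have hφmIter : ∀ n : ℕ, Measurable ((Projectivization.map A g.injective)^[n]) :=
      fun n => hφm.iterate n
    have hνiter : ∀ (n : ℕ) (S : Set (Projectivization ℂ (Fin (N + 1) → ℂ))),
        MeasurableSet S → ν ((Projectivization.map A g.injective)^[n] ⁻¹' S) = ν S := by
      intro n
      induction n with
      | zero => intro S hS; simp
      | succ n ih =>
        intro S hS
        rw [Function.iterate_succ, Set.preimage_comp,
          ← Measure.map_apply hφm ((hφmIter n) hS), hφinv]
        exact ih S hS
    -- scale invariance of the defining inequality
    have hscale : ∀ (w : Fin (N + 1) → ℂ) (hw : w ≠ 0) (j : ℕ),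
        (((j : ℝ) + 1) * ‖ℓ₀ (Projectivization.mk ℂ w hw).rep‖
            < ‖(Projectivization.mk ℂ w hw).rep‖
          ↔ ((j : ℝ) + 1) * ‖ℓ₀ w‖ < ‖w‖) := by
      intro w hw j
      obtain ⟨a, ha⟩ := Projectivization.exists_smul_eq_mk_rep ℂ w hw
      rw [← ha, Units.smul_def]
      have h1 : ℓ₀ ((a : ℂ) • w) = (a : ℂ) * ℓ₀ w := by
        rw [_root_.map_smul, smul_eq_mul]
      have h2 : ‖(a : ℂ) • w‖ = ‖(a : ℂ)‖ * ‖w‖ := norm_smul _ _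
      have h3 : ‖(a : ℂ) * ℓ₀ w‖ = ‖(a : ℂ)‖ * ‖ℓ₀ w‖ := norm_mul _ _
      rw [h1, h2, h3]
      exact aux_mul_lt_scale (norm_pos_iff.mpr (Units.ne_zero a))
    -- the open neighborhoods of the hyperplane at infinity
    set U : ℕ → Set (Projectivization ℂ (Fin (N + 1) → ℂ)) :=
      fun j => {x | ((j : ℝ) + 1) * ‖ℓ₀ x.rep‖ < ‖x.rep‖} with hUdef
    have hUopen : ∀ j : ℕ, IsOpen (U j) := by
      intro j
      refine isQuotientMap_quotient_mk'.isOpen_preimage.mp ?_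
      have heq : (Quotient.mk' : {v : Fin (N + 1) → ℂ // v ≠ 0} →
            Projectivization ℂ (Fin (N + 1) → ℂ)) ⁻¹' (U j)
          = {y : {v : Fin (N + 1) → ℂ // v ≠ 0} | ((j : ℝ) + 1) * ‖ℓ₀ y.1‖ < ‖y.1‖} := by
        ext y
        exact hscale y.1 y.2 j
      rw [heq]
      exact isOpen_lt (continuous_const.mul ((hℓ₀c.comp continuous_subtype_val).norm))
        (continuous_subtype_val.norm)
    have hUmeas : ∀ j, MeasurableSet (U j) := fun j => (hUopen j).measurableSet
    have hUanti : Antitone U := by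
      intro j j' hjj' x hx
      have h1 : ((j : ℝ) + 1) * ‖ℓ₀ x.rep‖ ≤ ((j' : ℝ) + 1) * ‖ℓ₀ x.rep‖ :=
        mul_le_mul_of_nonneg_right (by exact_mod_cast add_le_add (Nat.cast_le.mpr hjj') le_rfl)
          (norm_nonneg _)
      exact lt_of_le_of_lt h1 hx
    have hUint : (⋂ j, U j) = {x : Projectivization ℂ (Fin (N + 1) → ℂ) | ℓ₀ x.rep = 0} := by
      ext x
      simp only [Set.mem_iInter, hUdef, Set.mem_setOf_eq]
      constructor
      · intro h
        by_contra hne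
        have hpos : 0 < ‖ℓ₀ x.rep‖ := norm_pos_iff.mpr hne
        obtain ⟨n, hn⟩ := exists_nat_gt (‖x.rep‖ / ‖ℓ₀ x.rep‖)
        have h1 := h n
        rw [div_lt_iff₀ hpos] at hn
        have h2 : ‖x.rep‖ < ((n : ℝ) + 1) * ‖ℓ₀ x.rep‖ := by nlinarith [norm_nonneg (ℓ₀ x.rep)]
        linarith
      · intro h j
        rw [h, norm_zero, mul_zero]
        exact norm_pos_iff.mpr (Projectivization.rep_nonzero x)
    -- eventually the orbit enters U j
    have hEv : ∀ (j : ℕ) (x : Projectivization ℂ (Fin (N + 1) → ℂ)), B x.rep ≠ 0 →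
        ∀ᶠ k in atTop, (Projectivization.map A g.injective)^[σ k] x ∈ U j := by
      intro j x hx
      have hrep : x.rep ≠ 0 := Projectivization.rep_nonzero x
      have hml : ∀ n, (Projectivization.map A g.injective)^[n] x
          = Projectivization.mk ℂ ((A ^ n) x.rep) (hpowne n _ hrep) := by
        intro n
        conv_lhs => rw [← Projectivization.mk_rep x]
        exact aux_iter_mk A g.injective hpowne n x.rep hrep
      have hmem : ∀ n, ((Projectivization.map A g.injective)^[n] x ∈ U j
          ↔ ((j : ℝ) + 1) * ‖ℓ₀ ((A ^ n) x.rep)‖ < ‖(A ^ n) x.rep‖) := by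
        intro n
        rw [hml n]
        exact hscale _ _ j
      have l1 : Tendsto (fun k => ‖C (σ k) x.rep‖) atTop (𝓝 ‖B x.rep‖) :=
        (continuous_norm.tendsto _).comp (hApp x.rep)
      have l2 : Tendsto (fun k => ‖ℓ₀ (C (σ k) x.rep)‖) atTop (𝓝 ‖ℓ₀ (B x.rep)‖) :=
        ((continuous_norm.tendsto _).comp (hℓ₀c.tendsto _)).comp (hApp x.rep)
      have hlim1 : Tendsto
          (fun k => ‖C (σ k) x.rep‖ - ((j : ℝ) + 1) * ‖ℓ₀ (C (σ k) x.rep)‖)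
          atTop (𝓝 (‖B x.rep‖ - ((j : ℝ) + 1) * ‖ℓ₀ (B x.rep)‖)) :=
        l1.sub (l2.const_mul _)
      have hpos : 0 < ‖B x.rep‖ - ((j : ℝ) + 1) * ‖ℓ₀ (B x.rep)‖ := by
        rw [hℓ₀B x.rep, norm_zero, mul_zero, sub_zero]
        exact norm_pos_iff.mpr hx
      have hev0 := hlim1.eventually_const_lt hpos
      filter_upwards [hev0] with k hk
      rw [hmem (σ k)]
      have e1 : ‖C (σ k) x.rep‖ = ‖Ac ^ (σ k)‖⁻¹ * ‖(A ^ (σ k)) x.rep‖ := by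
        rw [hnormsmul, hpow_eq]
      have e2 : ‖ℓ₀ (C (σ k) x.rep)‖ = ‖Ac ^ (σ k)‖⁻¹ * ‖ℓ₀ ((A ^ (σ k)) x.rep)‖ := by
        rw [hCapp, hpow_eq]
        have h := _root_.map_smul ℓ₀ ((‖Ac ^ (σ k)‖ : ℂ))⁻¹ ((A ^ (σ k)) x.rep)
        rw [h, smul_eq_mul, norm_mul, norm_inv, Complex.norm_real,
          Real.norm_of_nonneg (norm_nonneg _)]
      rw [e1, e2] at hk
      exact (aux_mul_lt_scale (inv_pos.mpr (hAcn (σ k)))).mp (by linarith)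
    -- each U j has full measure
    have hU_big : ∀ j : ℕ, ν Set.univ ≤ ν (U j) := by
      intro j
      set E : ℕ → Set (Projectivization ℂ (Fin (N + 1) → ℂ)) :=
        fun M => ⋂ k : ℕ, ((Projectivization.map A g.injective)^[σ (M + k)]) ⁻¹' (U j)
        with hEdef
      have hEmeas : ∀ M, MeasurableSet (E M) := fun M =>
        MeasurableSet.iInter (fun k => (hφmIter _) (hUmeas j))
      have hEmono : Monotone E := by
        intro M M' hMM' x hx
        simp only [hEdef, Set.mem_iInter] at hx ⊢
        intro k
        have harith : M + ((M' - M) + k) = M' + k := by omega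
        have := hx ((M' - M) + k)
        rwa [harith] at this
      have hGfull : {x : Projectivization ℂ (Fin (N + 1) → ℂ) | B x.rep ≠ 0}
          ⊆ ⋃ M, E M := by
        intro x hx
        obtain ⟨M, hM⟩ := eventually_atTop.mp (hEv j x hx)
        refine Set.mem_iUnion.mpr ⟨M, ?_⟩
        simp only [hEdef, Set.mem_iInter]
        intro k
        exact hM (M + k) (Nat.le_add_right M k)
      have hnull : ν {x : Projectivization ℂ (Fin (N + 1) → ℂ) | B x.rep = 0} = 0 := by
        refine measure_mono_null ?_ (hhyp ℓ' hℓ'ne)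
        intro x hx
        exact LinearMap.mem_ker.mp (hker (LinearMap.mem_ker.mpr hx))
      have h1 : ν Set.univ ≤ ν {x : Projectivization ℂ (Fin (N + 1) → ℂ) | B x.rep ≠ 0} := by
        have hcover : (Set.univ : Set (Projectivization ℂ (Fin (N + 1) → ℂ)))
            ⊆ {x | B x.rep ≠ 0} ∪ {x | B x.rep = 0} := by
          intro x _
          by_cases h : B x.rep = 0
          · exact Or.inr h
          · exact Or.inl h
        calc ν Set.univ ≤ ν ({x | B x.rep ≠ 0} ∪ {x | B x.rep = 0}) := measure_mono hcover
          _ ≤ ν {x | B x.rep ≠ 0} + ν {x | B x.rep = 0} := measure_union_le _ _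
          _ = ν {x | B x.rep ≠ 0} := by rw [hnull, add_zero]
      have h2 : ν {x : Projectivization ℂ (Fin (N + 1) → ℂ) | B x.rep ≠ 0}
          ≤ ν (⋃ M, E M) := measure_mono hGfull
      have h3 : ν (⋃ M, E M) = ⨆ M, ν (E M) :=
        hEmono.directed_le.measure_iUnion
      have h4 : ∀ M, ν (E M) ≤ ν (U j) := by
        intro M
        have hsub : E M ⊆ ((Projectivization.map A g.injective)^[σ M]) ⁻¹' (U j) := by
          have hs := Set.iInter_subset
            (fun k => ((Projectivization.map A g.injective)^[σ (M + k)]) ⁻¹' (U j)) 0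
          simpa using hs
        calc ν (E M) ≤ ν (((Projectivization.map A g.injective)^[σ M]) ⁻¹' (U j)) :=
              measure_mono hsub
          _ = ν (U j) := hνiter (σ M) (U j) (hUmeas j)
      calc ν Set.univ ≤ ν {x : Projectivization ℂ (Fin (N + 1) → ℂ) | B x.rep ≠ 0} := h1
        _ ≤ ν (⋃ M, E M) := h2
        _ = ⨆ M, ν (E M) := h3
        _ ≤ ν (U j) := iSup_le h4
    -- conclude
    have hlimI := tendsto_measure_iInter_atTop (μ := ν)
      (fun j => (hUmeas j).nullMeasurableSet) hUanti ⟨0, measure_ne_top ν _⟩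
    rw [hUint, hhyp ℓ₀ hℓ₀ne] at hlimI
    have hge : ν Set.univ ≤ 0 := ge_of_tendsto' hlimI (fun j => hU_big j)
    exact hνne (Measure.measure_univ_eq_zero.mp (le_antisymm hge (by positivity)))
end

section
/- Let K be a field of characteristic zero equipped with a multiplicative norm ‖·‖ (‖xy‖ = ‖x‖·‖y‖, ‖x‖ = 0 iff x = 0, triangle inequality) which is nontrivial (there exists x ∈ K with ‖x‖ ≠ 0 and ‖x‖ ≠ 1), and suppose K is locally compact in the topology induced by this norm. Then exactly one of the following holds: (a) there is a ring isomorphism K ≅ ℝ; (b) there is a ring isomorphism K ≅ ℂ; or (c) there exist a prime number p and a ring homomorphism ι : ℚ_p → K making K a finite-dimensional ℚ_p-vector space. -/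
open Polynomial

lemma two_norm : ‖(2 : ℤ_[2])‖ = 2⁻¹ := by
  have := @PadicInt.norm_p 2 _
  norm_num at this
  linarith

/-- In `ℚ_[p]`, `-1` is `a² + b² + n` for some natural `n`. -/
lemma padic_neg_one_rep (p : ℕ) [hp : Fact p.Prime] :
    ∃ (a b : ℚ_[p]) (n : ℕ), a ^ 2 + b ^ 2 + (n : ℚ_[p]) = -1 := by
  rcases eq_or_ne p 2 with rfl | hodd
  · -- p = 2 : find z with z² = -7, then z² + 0² + 6 = -1
    have hcond : ‖(X ^ 2 + C (7 : ℤ_[2])).eval 1‖ <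
        ‖(X ^ 2 + C (7 : ℤ_[2])).derivative.eval 1‖ ^ 2 := by
      have h1 : ((X ^ 2 + C (7 : ℤ_[2])).eval 1) = 2 * 2 * 2 := by simp; norm_num
      have h2 : ((X ^ 2 + C (7 : ℤ_[2])).derivative.eval 1) = 2 := by
        simp [derivative_X_pow]; norm_num
      rw [h1, h2, norm_mul, norm_mul, two_norm]
      norm_num
    obtain ⟨z, hz, -⟩ := hensels_lemma hcond
    simp only [map_add, map_pow, aeval_X, aeval_C, Algebra.algebraMap_self, RingHom.id_apply] at hz
    refine ⟨(z : ℚ_[2]), 0, 6, ?_⟩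
    have hz' : ((z : ℚ_[2]) ^ 2 + 7) = 0 := by
      exact_mod_cast congrArg (fun t : ℤ_[2] => (t : ℚ_[2])) hz
    push_cast
    linear_combination hz'
  · -- p odd
    obtain ⟨a, b, hab⟩ := ZMod.sq_add_sq p (-1 : ZMod p)
    have hab0 : a ≠ 0 ∨ b ≠ 0 := by
      by_contra h
      push_neg at h
      rw [h.1, h.2] at hab
      simp at hab
    obtain ⟨a, b, hab, ha⟩ : ∃ a b : ZMod p, a ^ 2 + b ^ 2 = -1 ∧ a ≠ 0 := by
      rcases hab0 with h | h
      · exact ⟨a, b, hab, h⟩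
      · exact ⟨b, a, by linear_combination hab, h⟩
    -- lift to ℤ_[p]
    set A : ℤ_[p] := (a.val : ℤ_[p]) with hA
    set B : ℤ_[p] := (b.val : ℤ_[p]) with hB
    have hmapA : (PadicInt.toZMod A) = a := by
      rw [hA]
      rw [map_natCast]
      simp [ZMod.natCast_val, ZMod.cast_id]
    have hmapB : (PadicInt.toZMod B) = b := by
      rw [hB, map_natCast]
      simp [ZMod.natCast_val, ZMod.cast_id]
    -- ‖A² + B² + 1‖ < 1
    have hker : PadicInt.toZMod (A ^ 2 + B ^ 2 + 1) = 0 := by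
      simp [hmapA, hmapB, hab]
    have hlt : ‖A ^ 2 + B ^ 2 + 1‖ < 1 := by
      rw [PadicInt.norm_lt_one_iff_dvd, ← Ideal.mem_span_singleton,
        ← PadicInt.maximalIdeal_eq_span_p, ← PadicInt.ker_toZMod, RingHom.mem_ker]
      exact hker
    have hndvd : ¬ ((p : ℤ) ∣ (a.val : ℤ)) := by
      rw [Int.natCast_dvd_natCast]
      intro hdvd
      apply ha
      have : ((a.val : ℕ) : ZMod p) = 0 := (ZMod.natCast_eq_zero_iff _ _).mpr hdvd
      rwa [ZMod.natCast_val, ZMod.cast_id] at this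
    have hAnorm : ‖A‖ = 1 := by
      rcases lt_or_eq_of_le (PadicInt.norm_le_one A) with h | h
      · exfalso
        apply hndvd
        rw [← PadicInt.norm_int_lt_one_iff_dvd]
        exact_mod_cast h
      · exact h
    have h2norm : ‖(2 : ℤ_[p])‖ = 1 := by
      rcases lt_or_eq_of_le (PadicInt.norm_le_one (2 : ℤ_[p])) with h | h
      · exfalso
        have : ((p : ℤ) ∣ (2 : ℤ)) := by
          rw [← PadicInt.norm_int_lt_one_iff_dvd]
          exact_mod_cast h
        have : p ∣ 2 := by exact_mod_cast this
        exact hodd ((Nat.prime_dvd_prime_iff_eq hp.out Nat.prime_two).mp this)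
      · exact h
    -- Hensel
    have hcond : ‖(X ^ 2 + C (B ^ 2 + 1)).eval A‖ <
        ‖(X ^ 2 + C (B ^ 2 + 1)).derivative.eval A‖ ^ 2 := by
      have h1 : (X ^ 2 + C (B ^ 2 + 1)).eval A = A ^ 2 + B ^ 2 + 1 := by
        simp; ring
      have h2 : (X ^ 2 + C (B ^ 2 + 1)).derivative.eval A = 2 * A := by
        rw [derivative_add, derivative_C, derivative_X_pow]
        simp
      rw [h1, h2, norm_mul, h2norm, hAnorm]
      simpa using hlt
    obtain ⟨z, hz, -⟩ := hensels_lemma hcond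
    simp only [map_add, map_pow, aeval_X, aeval_C, Algebra.algebraMap_self, RingHom.id_apply] at hz
    refine ⟨(z : ℚ_[p]), (B : ℚ_[p]), 0, ?_⟩
    have hz' : ((z : ℚ_[p]) ^ 2 + ((B : ℚ_[p]) ^ 2 + 1)) = 0 := by
      exact_mod_cast congrArg (fun t : ℤ_[p] => (t : ℚ_[p])) hz
    push_cast
    linear_combination hz'

open Polynomial


lemma no_hom_padic_real (p : ℕ) [Fact p.Prime] (f : ℚ_[p] →+* ℝ) : False := by
  obtain ⟨a, b, n, h⟩ := padic_neg_one_rep p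
  have h2 := congrArg f h
  simp only [map_add, map_pow, map_natCast, map_neg, map_one] at h2
  nlinarith [sq_nonneg (f a), sq_nonneg (f b), Nat.cast_nonneg (α := ℝ) n]

lemma no_padic_finite_algclosed (p : ℕ) [hp : Fact p.Prime] {F : Type*} [Field F]
    [IsAlgClosed F] (ι : ℚ_[p] →+* F) :
    letI := ι.toAlgebra
    ¬ FiniteDimensional ℚ_[p] F := by
  letI := ι.toAlgebra
  intro hfd
  obtain ⟨q, hqgt, hq⟩ := Nat.exists_infinite_primes (Module.finrank ℚ_[p] F + 1)
  have hp0 : (p : ℚ_[p]) ≠ 0 := Nat.cast_ne_zero.mpr hp.out.ne_zero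
  have hnotpow : ∀ b : ℚ_[p], b ^ q ≠ (p : ℚ_[p]) := by
    intro b hb
    have hb0 : b ≠ 0 := by
      rintro rfl
      rw [zero_pow (by omega : q ≠ 0)] at hb
      exact hp0 hb.symm
    have hnorm : ‖b‖ ^ q = ‖(p : ℚ_[p])‖ := by rw [← norm_pow, hb]
    rw [Padic.norm_p, Padic.norm_eq_zpow_neg_valuation hb0] at hnorm
    have hp1 : (1 : ℝ) < (p : ℝ) := by exact_mod_cast hp.out.one_lt
    have : ((p : ℝ) ^ (-b.valuation)) ^ (q : ℤ) = (p : ℝ) ^ (-1 : ℤ) := by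
      rw [zpow_natCast, hnorm, zpow_neg_one]
    rw [← zpow_mul] at this
    have hexp : -b.valuation * (q : ℤ) = -1 :=
      zpow_right_injective₀ (by positivity) (ne_of_gt hp1) this
    have hu : IsUnit ((q : ℤ)) :=
      IsUnit.of_mul_eq_one (a := (q : ℤ)) b.valuation (by linear_combination -hexp)
    rw [Int.isUnit_iff] at hu
    have hq2 := hq.two_le
    rcases hu with h | h <;> [skip; skip] <;>
      · have : (q : ℤ) = _ := h
        omega
  have hirr : Irreducible (X ^ q - C (p : ℚ_[p])) :=
    X_pow_sub_C_irreducible_of_prime hq hnotpow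
  have hq0 : q ≠ 0 := hq.ne_zero
  obtain ⟨z, hz⟩ := IsAlgClosed.exists_aeval_eq_zero F (X ^ q - C (p : ℚ_[p]))
    (by rw [degree_X_pow_sub_C (Nat.pos_of_ne_zero hq0)]; exact_mod_cast hq0)
  have hmin : minpoly ℚ_[p] z = X ^ q - C (p : ℚ_[p]) :=
    (minpoly.eq_of_irreducible_of_monic hirr hz (monic_X_pow_sub_C _ hq0)).symm
  have hle := minpoly.natDegree_le (A := ℚ_[p]) z
  rw [hmin, natDegree_X_pow_sub_C] at hle
  omega

lemma finiteDimensional_transfer {F K L : Type*} [Field F] [Field K] [Field L]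
    (σ : F →+* K) (e : K ≃+* L) (h : letI := σ.toAlgebra; FiniteDimensional F K) :
    letI := ((e : K →+* L).comp σ).toAlgebra
    FiniteDimensional F L := by
  letI := σ.toAlgebra
  letI := ((e : K →+* L).comp σ).toAlgebra
  let f : K →ₗ[F] L :=
    { toFun := e
      map_add' := map_add e
      map_smul' := by
        intro c x
        simp only [Algebra.smul_def, RingHom.algebraMap_toAlgebra, RingHom.coe_comp,
          Function.comp_apply, map_mul, RingHom.id_apply, RingEquiv.coe_toRingHom] }
  exact Module.Finite.of_surjective f e.surjective

lemma not_real_and_complex {K : Type*} [Field K] (e : K ≃+* ℝ) (e' : K ≃+* ℂ) : False := by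
  set g := e.symm.trans e'
  have h1 : g (g.symm Complex.I ^ 2) = g (-1) := by
    rw [map_pow, RingEquiv.apply_symm_apply, map_neg, map_one, Complex.I_sq]
  have h2 : (g.symm Complex.I) ^ 2 = -1 := g.injective h1
  nlinarith [sq_nonneg (g.symm Complex.I)]

lemma rpow_lt_rpow_iff_my {x y s : ℝ} (hx : 0 ≤ x) (hy : 0 ≤ y) (hs : 0 < s) :
    x ^ s < y ^ s ↔ x < y := by
  constructor
  · intro h
    by_contra hle
    push_neg at hle
    exact absurd h (not_lt.mpr (Real.rpow_le_rpow hy hle hs.le))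
  · intro h
    exact Real.rpow_lt_rpow hx h hs

section Pull

variable {K L : Type*} [NormedField K] [NormedField L]

/-- The absolute value on `L` obtained by pulling back the norm of `K` along `ι`. -/
noncomputable def pullAbs (ι : L →+* K) : AbsoluteValue L ℝ where
  toFun x := ‖ι x‖
  map_mul' x y := by simp
  nonneg' x := norm_nonneg _
  eq_zero' x := by simp [ι.injective.eq_iff]
  add_le' x y := by simpa using norm_add_le (ι x) (ι y)

lemma pullAbs_apply (ι : L →+* K) (x : L) : pullAbs ι x = ‖ι x‖ := rfl

lemma withAbs_norm (v : AbsoluteValue L ℝ) (x : WithAbs v) :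
    ‖x‖ = v (WithAbs.equiv v x) := rfl

lemma completeSpace_withAbs [CompleteSpace L] {s : ℝ} (hs : 0 < s) (v : AbsoluteValue L ℝ)
    (hv : ∀ x : L, v x = ‖x‖ ^ s) : CompleteSpace (WithAbs v) := by
  apply Metric.complete_of_cauchySeq_tendsto
  intro u hu
  set u' : ℕ → L := fun n => WithAbs.equiv v (u n) with hu'def
  have hdist : ∀ (x y : WithAbs v), dist x y =
      (dist (WithAbs.equiv v x) (WithAbs.equiv v y)) ^ s := by
    intro x y
    rw [dist_eq_norm, dist_eq_norm, withAbs_norm]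
    simp only [map_sub]
    exact hv _
  have hu2 : CauchySeq u' := by
    rw [Metric.cauchySeq_iff]
    intro ε hε
    obtain ⟨N, hN⟩ := Metric.cauchySeq_iff.mp hu (ε ^ s) (Real.rpow_pos_of_pos hε s)
    refine ⟨N, fun m hm n hn => ?_⟩
    have := hN m hm n hn
    rw [hdist] at this
    exact (rpow_lt_rpow_iff_my dist_nonneg hε.le hs).mp this
  obtain ⟨x, hx⟩ := cauchySeq_tendsto_of_complete hu2
  refine ⟨(WithAbs.equiv v).symm x, ?_⟩
  rw [Metric.tendsto_atTop]
  intro ε hε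
  obtain ⟨N, hN⟩ := Metric.tendsto_atTop.mp hx (ε ^ s⁻¹) (Real.rpow_pos_of_pos hε s⁻¹)
  refine ⟨N, fun n hn => ?_⟩
  have := hN n hn
  rw [hdist]
  have h2 : dist (WithAbs.equiv v (u n)) (WithAbs.equiv v ((WithAbs.equiv v).symm x)) <
      ε ^ s⁻¹ := by simpa [hu'def] using this
  calc dist (WithAbs.equiv v (u n)) (WithAbs.equiv v ((WithAbs.equiv v).symm x)) ^ s
      < (ε ^ s⁻¹) ^ s := (rpow_lt_rpow_iff_my dist_nonneg
        (Real.rpow_pos_of_pos hε s⁻¹).le hs).mpr h2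
    _ = ε := by rw [← Real.rpow_mul hε.le, inv_mul_cancel₀ hs.ne', Real.rpow_one]

end Pull

/-- Riesz-type finite-dimensionality over a complete nontrivially normed field embedded
with a power-of-norm compatibility. -/
lemma finiteDimensional_of_embedding {K L : Type*} [NormedField K]
    [NontriviallyNormedField L] [CompleteSpace L] [LocallyCompactSpace K]
    (ι : L →+* K) {s : ℝ} (hs : 0 < s) (hnorm : ∀ x : L, ‖ι x‖ = ‖x‖ ^ s) :
    letI := ι.toAlgebra
    FiniteDimensional L K := by
  letI := ι.toAlgebra
  set v : AbsoluteValue L ℝ := pullAbs ι with hv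
  have hvx : ∀ x : L, v x = ‖x‖ ^ s := fun x => hnorm x
  letI : NontriviallyNormedField (WithAbs v) :=
    { WithAbs.normedField v with
      non_trivial := by
        obtain ⟨c, hc⟩ := NormedField.exists_one_lt_norm L
        refine ⟨(WithAbs.equiv v).symm c, ?_⟩
        rw [withAbs_norm, RingEquiv.apply_symm_apply, hvx]
        exact Real.one_lt_rpow_iff_of_pos (lt_trans one_pos hc) |>.mpr (Or.inl ⟨hc, hs⟩) }
  haveI : CompleteSpace (WithAbs v) := completeSpace_withAbs hs v hvx
  set ι' : WithAbs v →+* K := ι.comp (WithAbs.equiv v : WithAbs v ≃+* L) with hι'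
  letI : Algebra (WithAbs v) K := ι'.toAlgebra
  letI : NormedSpace (WithAbs v) K :=
    { norm_smul_le := by
        intro a x
        show ‖ι' a * x‖ ≤ ‖a‖ * ‖x‖
        rw [norm_mul]
        exact le_of_eq rfl }
  haveI : FiniteDimensional (WithAbs v) K :=
    FiniteDimensional.of_locallyCompactSpace (𝕜 := WithAbs v) (E := K)
  -- transfer finite-dimensionality to the `L`-module structure via `ι.toAlgebra`
  obtain ⟨S, hS⟩ := Module.finite_def.mp ‹FiniteDimensional (WithAbs v) K›
  apply Module.finite_def.mpr
  have key : ∀ x : K, x ∈ Submodule.span (WithAbs v) (S : Set K) →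
      x ∈ Submodule.span L (S : Set K) := by
    intro x hx
    induction hx using Submodule.span_induction with
    | mem y hy => exact Submodule.subset_span hy
    | zero => exact (Submodule.span L _).zero_mem
    | add a b _ _ ha hb => exact (Submodule.span L _).add_mem ha hb
    | smul a z hz ih =>
        have h1 : a • z = (WithAbs.equiv v a) • z := by
          rfl
        rw [h1]
        exact Submodule.smul_mem _ _ ih
  exact ⟨S, eq_top_iff.mpr fun x _ => key x (hS ▸ Submodule.mem_top)⟩

lemma exists_extension {K L : Type*} [NormedField K] [CompleteSpace K] [CharZero K]
    [NormedField L] [CharZero L]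
    (hd : DenseRange ((Rat.cast) : ℚ → L)) {s : ℝ} (hs : 0 < s)
    (h : ∀ q : ℚ, ‖(q : K)‖ = ‖(q : L)‖ ^ s) :
    ∃ ι : L →+* K, ∀ x : L, ‖ι x‖ = ‖x‖ ^ s := by
  set w : AbsoluteValue ℚ ℝ := pullAbs (Rat.castHom L) with hw
  set i : WithAbs w →+* L := (Rat.castHom L).comp (WithAbs.equiv w) with hidef
  have hi : Isometry i := AddMonoidHomClass.isometry_of_norm i (fun x => rfl)
  have hui : IsUniformInducing i := hi.isUniformInducing
  have hdr : DenseRange i := by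
    have hr : Set.range i = Set.range ((Rat.cast) : ℚ → L) := by
      ext x
      constructor
      · rintro ⟨a, rfl⟩; exact ⟨WithAbs.equiv w a, by rfl⟩
      · rintro ⟨q, rfl⟩; exact ⟨(WithAbs.equiv w).symm q, by simp [hidef]⟩
    unfold DenseRange
    rw [hr]
    exact hd
  set f : WithAbs w →+* K := (Rat.castHom K).comp (WithAbs.equiv w) with hfdef
  have h1 : ∀ y : WithAbs w, ‖f y‖ = ‖y‖ ^ s := by
    intro y
    have h2 : ‖i y‖ = ‖y‖ := hi.norm_map_of_map_zero (map_zero i) y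
    have h3 := h (WithAbs.equiv w y)
    have hfy : f y = ((WithAbs.equiv w y : ℚ) : K) := rfl
    have hiy : i y = ((WithAbs.equiv w y : ℚ) : L) := rfl
    rw [hfy, ← h2, hiy]
    exact h3
  have hdista : ∀ a b : WithAbs w, dist (f a) (f b) = (dist a b) ^ s := by
    intro a b
    rw [dist_eq_norm, dist_eq_norm, ← map_sub, h1]
  have hf : UniformContinuous f := by
    rw [Metric.uniformContinuous_iff]
    intro ε hε
    refine ⟨ε ^ s⁻¹, Real.rpow_pos_of_pos hε _, fun {a b} hab => ?_⟩
    rw [hdista]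
    calc (dist a b) ^ s < (ε ^ s⁻¹) ^ s :=
          (rpow_lt_rpow_iff_my dist_nonneg (Real.rpow_pos_of_pos hε _).le hs).mpr hab
      _ = ε := by rw [← Real.rpow_mul hε.le, inv_mul_cancel₀ hs.ne', Real.rpow_one]
  refine ⟨IsDenseInducing.extendRingHom hui hdr hf, ?_⟩
  have hcont : Continuous ((hui.isDenseInducing hdr).extend f) :=
    (uniformContinuous_uniformly_extend hui hdr hf).continuous
  have hc1 : Continuous fun x : L => ‖(hui.isDenseInducing hdr).extend f x‖ :=
    continuous_norm.comp hcont
  have hc2 : Continuous fun x : L => ‖x‖ ^ s :=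
    continuous_norm.rpow_const (fun x => Or.inr hs.le)
  have key : (fun x : L => ‖(hui.isDenseInducing hdr).extend f x‖) = fun x : L => ‖x‖ ^ s := by
    apply hdr.equalizer hc1 hc2
    funext a
    show ‖(hui.isDenseInducing hdr).extend f (i a)‖ = ‖i a‖ ^ s
    rw [IsDenseInducing.extend_eq (hui.isDenseInducing hdr) hf.continuous a, h1,
      hi.norm_map_of_map_zero (map_zero i)]
  intro x
  exact congrFun key x

lemma rat_norm_nontrivial {K : Type*} [NormedField K] [CharZero K]
    (hcpt : IsCompact (Metric.closedBall (0 : K) 1)) :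
    ∃ q : ℚ, q ≠ 0 ∧ ‖(q : K)‖ ≠ 1 := by
  by_contra hcon
  push_neg at hcon
  have hmem : ∀ n : ℕ, ((n : K)) ∈ Metric.closedBall (0 : K) 1 := by
    intro n
    rw [Metric.mem_closedBall, dist_zero_right]
    rcases eq_or_ne n 0 with rfl | h
    · simp
    · have := hcon (n : ℚ) (by exact_mod_cast h)
      push_cast at this
      rw [this]
  obtain ⟨x, -, φ, hφ, hlim⟩ := hcpt.tendsto_subseq hmem
  have hcs : CauchySeq (fun n => ((φ n : ℕ) : K)) := hlim.cauchySeq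
  obtain ⟨N, hN⟩ := Metric.cauchySeq_iff'.mp hcs 1 one_pos
  have h2 := hN (N + 1) (Nat.le_succ N)
  have hne : (φ (N + 1) : ℚ) - (φ N : ℚ) ≠ 0 := by
    have := hφ (Nat.lt_succ_self N)
    rw [sub_ne_zero]
    exact_mod_cast this.ne'
  have heq : dist ((φ (N + 1) : ℕ) : K) ((φ N : ℕ) : K) = 1 := by
    rw [dist_eq_norm]
    have hval := hcon _ hne
    have hcast : ((φ (N + 1) : ℕ) : K) - ((φ N : ℕ) : K) =
        ((((φ (N + 1) : ℚ) - (φ N : ℚ)) : ℚ) : K) := by push_cast; ring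
    rw [hcast]
    exact hval
  rw [heq] at h2
  exact lt_irrefl _ h2

lemma real_classify {K : Type*} [Field K] (ι : ℝ →+* K)
    (h : letI := ι.toAlgebra; FiniteDimensional ℝ K) :
    Nonempty (K ≃+* ℝ) ∨ Nonempty (K ≃+* ℂ) := by
  letI := ι.toAlgebra
  haveI := h
  haveI : Algebra.IsAlgebraic ℝ K := Algebra.IsAlgebraic.of_finite ℝ K
  let φ : K →ₐ[ℝ] ℂ := IsAlgClosed.lift
  have hinj : Function.Injective φ := φ.toRingHom.injective
  have hle : Module.finrank ℝ K ≤ 2 := by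
    have h2 := LinearMap.finrank_le_finrank_of_injective (f := φ.toLinearMap) hinj
    rwa [Complex.finrank_real_complex] at h2
  have hpos : 0 < Module.finrank ℝ K := Module.finrank_pos
  rcases (by omega : Module.finrank ℝ K = 1 ∨ Module.finrank ℝ K = 2) with h1 | h2
  · left
    have hbot : (⊥ : Subalgebra ℝ K) = ⊤ := Subalgebra.bot_eq_top_iff_finrank_eq_one.mpr h1
    have hsurj : Function.Surjective (algebraMap ℝ K) := by
      intro x
      have : x ∈ (⊥ : Subalgebra ℝ K) := hbot.symm ▸ Algebra.mem_top
      obtain ⟨r, hr⟩ := Algebra.mem_bot.mp this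
      exact ⟨r, hr⟩
    exact ⟨(RingEquiv.ofBijective (algebraMap ℝ K)
      ⟨(algebraMap ℝ K).injective, hsurj⟩).symm⟩
  · right
    have hr : Module.finrank ℝ (LinearMap.range φ.toLinearMap) = 2 := by
      rw [LinearMap.finrank_range_of_inj hinj, h2]
    have htop : LinearMap.range φ.toLinearMap = ⊤ :=
      Submodule.eq_top_of_finrank_eq (by rw [hr, Complex.finrank_real_complex])
    have hsurj : Function.Surjective φ := LinearMap.range_eq_top.mp htop
    exact ⟨RingEquiv.ofBijective φ.toRingHom ⟨hinj, hsurj⟩⟩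

lemma not_complex_and_padic_K {K : Type*} [Field K] (e : K ≃+* ℂ) (p : ℕ) [Fact p.Prime]
    (ι : ℚ_[p] →+* K) (h : letI := ι.toAlgebra; FiniteDimensional ℚ_[p] K) : False :=
  no_padic_finite_algclosed p ((e : K →+* ℂ).comp ι) (finiteDimensional_transfer ι e h)

noncomputable def ratNorm (K : Type*) [NormedField K] [CharZero K] : MulRingNorm ℚ where
  toFun q := ‖(q : K)‖
  map_zero' := by simp
  add_le' r s := by push_cast; exact norm_add_le _ _
  neg' r := by push_cast; simp
  map_one' := by simp
  map_mul' r s := by push_cast; exact norm_mul _ _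
  eq_zero_of_map_eq_zero' := fun q h => by
    have : ((q : K)) = 0 := norm_eq_zero.mp h
    exact_mod_cast this

/-- Classification of local fields of characteristic zero: a field `K` of characteristic
zero with a nontrivial multiplicative norm, locally compact in the induced topology, is
ring-isomorphic to exactly one of: `ℝ`, `ℂ`, or a finite extension of some `ℚ_p`. -/
theorem stmt_10 (K : Type) [NormedField K] [CharZero K]
    (hnontriv : ∃ x : K, ‖x‖ ≠ 0 ∧ ‖x‖ ≠ 1)
    (hlc : LocallyCompactSpace K) :
    (Nonempty (K ≃+* ℝ) ∧ ¬ Nonempty (K ≃+* ℂ) ∧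
      ¬ (∃ (p : ℕ) (hp : p.Prime),
          letI : Fact p.Prime := ⟨hp⟩
          ∃ ι : ℚ_[p] →+* K,
            letI : Algebra ℚ_[p] K := ι.toAlgebra
            FiniteDimensional ℚ_[p] K)) ∨
    (¬ Nonempty (K ≃+* ℝ) ∧ Nonempty (K ≃+* ℂ) ∧
      ¬ (∃ (p : ℕ) (hp : p.Prime),
          letI : Fact p.Prime := ⟨hp⟩
          ∃ ι : ℚ_[p] →+* K,
            letI : Algebra ℚ_[p] K := ι.toAlgebra
            FiniteDimensional ℚ_[p] K)) ∨
    (¬ Nonempty (K ≃+* ℝ) ∧ ¬ Nonempty (K ≃+* ℂ) ∧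
      (∃ (p : ℕ) (hp : p.Prime),
          letI : Fact p.Prime := ⟨hp⟩
          ∃ ι : ℚ_[p] →+* K,
            letI : Algebra ℚ_[p] K := ι.toAlgebra
            FiniteDimensional ℚ_[p] K)) := by
  obtain ⟨x, hx0, hx1⟩ := hnontriv
  have hnt : ∃ y : K, 1 < ‖y‖ := by
    rcases lt_or_gt_of_ne hx1 with hlt | hgt
    · have hxpos : 0 < ‖x‖ := lt_of_le_of_ne (norm_nonneg x) (Ne.symm hx0)
      refine ⟨x⁻¹, ?_⟩
      rw [norm_inv]
      exact (one_lt_inv₀ hxpos).mpr hlt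
    · exact ⟨x, hgt⟩
  letI : NontriviallyNormedField K := { ‹NormedField K› with non_trivial := hnt }
  haveI := hlc
  haveI : ProperSpace K :=
    ProperSpace.of_nontriviallyNormedField_of_weaklyLocallyCompactSpace K
  obtain ⟨q0, hq00, hq01⟩ := rat_norm_nontrivial (isCompact_closedBall (0 : K) 1)
  set f : MulRingNorm ℚ := ratNorm K with hfdef
  have hf1 : f ≠ 1 := by
    intro hcontra
    apply hq01
    have h := congrArg (fun g : MulRingNorm ℚ => g q0) hcontra
    simp only [hfdef] at h
    rw [show (1 : MulRingNorm ℚ) q0 = 1 by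
      simp [MulRingNorm.apply_one, hq00]] at h
    exact h
  rcases (show (∃ c : ℝ, 0 < c ∧ (fun x => f x ^ c) = ⇑Rat.AbsoluteValue.real) ∨
      ∃! p, ∃ (_ : Fact p.Prime), ∃ c : ℝ, 0 < c ∧ (fun x => f x ^ c) = ⇑(Rat.AbsoluteValue.padic p)
      from by
        have hnt : (pullAbs (Rat.castHom K)).IsNontrivial := ⟨q0, hq00, hq01⟩
        rcases Rat.AbsoluteValue.equiv_real_or_padic _ hnt with h | h
        · left; exact AbsoluteValue.isEquiv_iff_exists_rpow_eq.mp h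
        · right
          obtain ⟨p, ⟨hfp, hpe⟩, hu⟩ := h
          exact ⟨p, ⟨hfp, AbsoluteValue.isEquiv_iff_exists_rpow_eq.mp hpe⟩,
            fun p' ⟨hf', he'⟩ => hu p' ⟨hf', AbsoluteValue.isEquiv_iff_exists_rpow_eq.mpr he'⟩⟩)
    with hreal | hpadic
  · -- archimedean case
    obtain ⟨c, hc0, hceq⟩ := hreal
    have hs : (0 : ℝ) < c⁻¹ := by positivity
    have hkey : ∀ q : ℚ, ‖(q : K)‖ = ‖(q : ℝ)‖ ^ (c⁻¹) := by
      intro q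
      have h1 := congrFun hceq q
      have h2 : Rat.AbsoluteValue.real q = ‖(q : ℝ)‖ := by
        rw [Rat.AbsoluteValue.real_eq_abs, Real.norm_eq_abs]
        exact Rat.cast_abs q
      have h3 : ((f q) ^ c) ^ (c⁻¹) = f q := by
        rw [← Real.rpow_mul (apply_nonneg f q), mul_inv_cancel₀ hc0.ne', Real.rpow_one]
      calc ‖(q : K)‖ = f q := rfl
        _ = ((f q) ^ c) ^ (c⁻¹) := h3.symm
        _ = (Rat.AbsoluteValue.real q) ^ (c⁻¹) := by rw [h1]
        _ = ‖(q : ℝ)‖ ^ (c⁻¹) := by rw [h2]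
    obtain ⟨ι, hι⟩ := exists_extension Rat.denseRange_cast hs hkey
    have hfd := finiteDimensional_of_embedding ι hs hι
    rcases real_classify ι hfd with he | he
    · obtain ⟨e⟩ := he
      refine Or.inl ⟨⟨e⟩, ?_, ?_⟩
      · rintro ⟨e'⟩
        exact not_real_and_complex e e'
      · rintro ⟨p, hp, hrest⟩
        haveI : Fact p.Prime := ⟨hp⟩
        obtain ⟨ι', -⟩ := hrest
        exact no_hom_padic_real p ((e : K →+* ℝ).comp ι')
    · obtain ⟨e⟩ := he
      refine Or.inr (Or.inl ⟨?_, ⟨e⟩, ?_⟩)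
      · rintro ⟨e'⟩
        exact not_real_and_complex e' e
      · rintro ⟨p, hp, hrest⟩
        haveI : Fact p.Prime := ⟨hp⟩
        obtain ⟨ι', hfd'⟩ := hrest
        exact not_complex_and_padic_K e p ι' hfd'
  · -- p-adic case
    obtain ⟨p, ⟨hfp, hpe⟩, -⟩ := hpadic
    haveI : Fact p.Prime := hfp
    obtain ⟨c, hc0, hceq⟩ := hpe
    have hs : (0 : ℝ) < c⁻¹ := by positivity
    have hkey : ∀ q : ℚ, ‖(q : K)‖ = ‖(q : ℚ_[p])‖ ^ (c⁻¹) := by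
      intro q
      have h1 := congrFun hceq q
      have h2 : Rat.AbsoluteValue.padic p q = ‖(q : ℚ_[p])‖ := by
        rw [Rat.AbsoluteValue.padic_eq_padicNorm, Padic.eq_padicNorm]
      have h3 : ((f q) ^ c) ^ (c⁻¹) = f q := by
        rw [← Real.rpow_mul (apply_nonneg f q), mul_inv_cancel₀ hc0.ne', Real.rpow_one]
      calc ‖(q : K)‖ = f q := rfl
        _ = ((f q) ^ c) ^ (c⁻¹) := h3.symm
        _ = (Rat.AbsoluteValue.padic p q) ^ (c⁻¹) := by rw [h1]
        _ = ‖(q : ℚ_[p])‖ ^ (c⁻¹) := by rw [h2]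
    have hd : DenseRange ((Rat.cast) : ℚ → ℚ_[p]) := by
      rw [Metric.denseRange_iff]
      intro x r hr
      obtain ⟨q, hq⟩ := Padic.rat_dense (p := p) x hr
      exact ⟨q, by rwa [dist_eq_norm]⟩
    obtain ⟨ι, hι⟩ := exists_extension hd hs hkey
    have hfd := finiteDimensional_of_embedding ι hs hι
    refine Or.inr (Or.inr ⟨?_, ?_, p, hfp.out, ι, hfd⟩)
    · rintro ⟨e⟩
      exact no_hom_padic_real p ((e : K →+* ℝ).comp ι)
    · rintro ⟨e⟩
      exact not_complex_and_padic_K e p ι hfd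
end
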